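/- Let H be a d-uniform properly-connected hypergraph, E any edge, and H' = {K edge of H : dist_H(E, K) ≥ d+1}. Then the sub-hypergraph H' is also a d-uniform properly-connected hypergraph. -/

import Mathlib

open Finset
open scoped Classical

noncomputable section

/-- A simple hypergraph: all edges have at least two vertices and no edge contains another. -/
structure SimpleHypergraph (V : Type*) where
  edges : Finset (Finset V)
  card_ge : ∀ e ∈ edges, 2 ≤ e.card
  antichain : ∀ e ∈ edges, ∀ f ∈ edges, e ⊆ f → e = f

variable {V : Type*} [DecidableEq V]

/-- A chain `(E₀, x₁, E₁, …, xₙ, Eₙ)` in a hypergraph, recorded as the list of its edges;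
the vertex conditions amount to `xₖ ∈ Eₖ₋₁ ∩ Eₖ`. -/
def IsHChain (H : SimpleHypergraph V) (l : List (Finset V)) : Prop :=
  l ≠ [] ∧ l.Nodup ∧ (∀ e ∈ l, e ∈ H.edges) ∧
  ∃ xs : List V, xs.Nodup ∧ xs.length + 1 = l.length ∧
    ∀ i, (h : i < xs.length) → xs.get ⟨i, h⟩ ∈ l.getD i ∅ ∩ l.getD (i+1) ∅

/-- A proper chain: `|Eᵢ ∩ Eᵢ₊₁| = |Eᵢ₊₁| - 1` for all `i`. -/
def IsProperChain (H : SimpleHypergraph V) (l : List (Finset V)) : Prop :=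
  IsHChain H l ∧ ∀ i, i + 1 < l.length →
    (l.getD i ∅ ∩ l.getD (i+1) ∅).card + 1 = (l.getD (i+1) ∅).card

/-- A proper irredundant chain: no proper subsequence with the same endpoints is a proper
chain. -/
def IsPIChain (H : SimpleHypergraph V) (l : List (Finset V)) : Prop :=
  IsProperChain H l ∧ ∀ l' : List (Finset V), l'.Sublist l → l' ≠ l →
    l'.head? = l.head? → l'.getLast? = l.getLast? → ¬ IsProperChain H l'

/-- The distance between two edges: minimal length of a proper irredundant chain
from `E` to `F` (`∞` if there is none). -/
def edgeDist (H : SimpleHypergraph V) (E F : Finset V) : ℕ∞ :=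
  sInf ((fun l : List (Finset V) => ((l.length - 1 : ℕ) : ℕ∞)) ''
    {l | IsPIChain H l ∧ l.head? = some E ∧ l.getLast? = some F})

/-- A `d`-uniform properly-connected hypergraph. -/
def UniformPC (H : SimpleHypergraph V) (d : ℕ) : Prop :=
  (∀ e ∈ H.edges, e.card = d) ∧
  ∀ E ∈ H.edges, ∀ F ∈ H.edges, (E ∩ F).Nonempty →
    edgeDist H E F = ((d - (E ∩ F).card : ℕ) : ℕ∞)

/-- The sub-hypergraph consisting of the edges satisfying `P`. -/
def SimpleHypergraph.restrict (H : SimpleHypergraph V) (P : Finset V → Prop) :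
    SimpleHypergraph V where
  edges := H.edges.filter P
  card_ge := fun e he => H.card_ge e (Finset.mem_filter.mp he).1
  antichain := fun e he f hf hef =>
    H.antichain e (Finset.mem_filter.mp he).1 f (Finset.mem_filter.mp hf).1 hef

private lemma getD_eq' {α : Type*} (l : List α) (d : α) {i : ℕ} (hi : i < l.length) :
    l.getD i d = l[i] := by
  simp [List.getD_eq_getElem?_getD, List.getElem?_eq_getElem hi]

private lemma head_getD {α : Type*} {l : List α} {d a : α} (h : l.head? = some a) :
    l.getD 0 d = a := by
  cases l with
  | nil => simp at h
  | cons b t => simp at h; simp [h]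

private lemma last_getD {α : Type*} {l : List α} {d a : α} (h : l.getLast? = some a) :
    l.getD (l.length - 1) d = a := by
  rw [List.getLast?_eq_getElem?] at h
  simp [List.getD_eq_getElem?_getD, h]

private lemma chain_edge_mem {H : SimpleHypergraph V} {l : List (Finset V)}
    (hl : IsHChain H l) {i : ℕ} (hi : i < l.length) : l.getD i ∅ ∈ H.edges := by
  rw [getD_eq' _ _ hi]; exact hl.2.2.1 _ (l.getElem_mem hi)

private lemma card_inter_mono (A B S : Finset V) (h1 : B.card ≤ (A ∩ B).card + 1) :
    (B ∩ S).card ≤ (A ∩ S).card + 1 := by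
  have hsub : B ∩ S ⊆ (A ∩ S) ∪ (B \ A) := by
    intro x hx
    simp only [Finset.mem_inter, Finset.mem_union, Finset.mem_sdiff] at *
    by_cases hA : x ∈ A
    · exact Or.inl ⟨hA, hx.2⟩
    · exact Or.inr ⟨hx.1, hA⟩
  have h2 : (B \ A).card ≤ 1 := by
    have h3 := Finset.card_inter_add_card_sdiff B A
    have h4 : (A ∩ B).card = (B ∩ A).card := by rw [Finset.inter_comm]
    omega
  calc (B ∩ S).card ≤ ((A ∩ S) ∪ (B \ A)).card := Finset.card_le_card hsub
    _ ≤ (A ∩ S).card + (B \ A).card := Finset.card_union_le _ _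
    _ ≤ (A ∩ S).card + 1 := by omega

private lemma chain_drop {H : SimpleHypergraph V} {d : ℕ}
    (huni : ∀ e ∈ H.edges, e.card = d)
    {l : List (Finset V)} (hl : IsProperChain H l) (S : Finset V) :
    ∀ r j, j + r < l.length →
      (l.getD (j+r) ∅ ∩ S).card ≤ (l.getD j ∅ ∩ S).card + r ∧
      (l.getD j ∅ ∩ S).card ≤ (l.getD (j+r) ∅ ∩ S).card + r := by
  intro r
  induction r with
  | zero => intro j h; simp
  | succ m ih =>
    intro j h
    have h1 : j + m < l.length := by omega
    have h2 : (j + m) + 1 < l.length := by omega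
    obtain ⟨ihl, ihr⟩ := ih j h1
    have hprop := hl.2 (j+m) h2
    have hA := chain_edge_mem hl.1 h1
    have hB := chain_edge_mem hl.1 h2
    have hcA := huni _ hA
    have hcB := huni _ hB
    have s1 : ((l.getD (j+m+1) ∅) ∩ S).card ≤ ((l.getD (j+m) ∅) ∩ S).card + 1 :=
      card_inter_mono _ _ _ (by omega)
    have s2 : ((l.getD (j+m) ∅) ∩ S).card ≤ ((l.getD (j+m+1) ∅) ∩ S).card + 1 := by
      refine card_inter_mono _ _ _ ?_
      rw [Finset.inter_comm]
      omega
    have e1 : j + (m+1) = j + m + 1 := rfl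
    rw [e1]
    omega

private lemma exists_pi_sublist {H : SimpleHypergraph V} :
    ∀ n (l : List (Finset V)), l.length ≤ n → IsProperChain H l →
    ∃ l', l'.Sublist l ∧ l'.head? = l.head? ∧ l'.getLast? = l.getLast? ∧ IsPIChain H l' := by
  intro n
  induction n with
  | zero =>
    intro l hn hl
    exact absurd (List.length_eq_zero_iff.mp (by omega)) hl.1.1
  | succ m ih =>
    intro l hn hl
    by_cases h : ∀ l'' : List (Finset V), l''.Sublist l → l'' ≠ l →
        l''.head? = l.head? → l''.getLast? = l.getLast? → ¬ IsProperChain H l''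
    · exact ⟨l, List.Sublist.refl l, rfl, rfl, hl, h⟩
    · push_neg at h
      obtain ⟨l'', hsub, hne, hh, hla, hpc⟩ := h
      have hlen : l''.length < l.length := by
        rcases Nat.lt_or_ge l''.length l.length with h' | h'
        · exact h'
        · exact absurd (hsub.eq_of_length (le_antisymm hsub.length_le h')) hne
      obtain ⟨l', h1, h2, h3, h4⟩ := ih l'' (by omega) hpc
      exact ⟨l', h1.trans hsub, h2.trans hh, h3.trans hla, h4⟩

private lemma edgeDist_le {H : SimpleHypergraph V} {l : List (Finset V)} {A B : Finset V}
    (hl : IsProperChain H l) (hh : l.head? = some A) (hla : l.getLast? = some B) :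
    edgeDist H A B ≤ ((l.length - 1 : ℕ) : ℕ∞) := by
  obtain ⟨l', hsub, hh', hla', hpi⟩ := exists_pi_sublist l.length l le_rfl hl
  have hmem : ((l'.length - 1 : ℕ) : ℕ∞) ∈
      ((fun l : List (Finset V) => ((l.length - 1 : ℕ) : ℕ∞)) ''
      {l | IsPIChain H l ∧ l.head? = some A ∧ l.getLast? = some B}) :=
    ⟨l', ⟨hpi, by rw [hh']; exact hh, by rw [hla']; exact hla⟩, rfl⟩
  refine le_trans (sInf_le hmem) (Nat.cast_le.mpr ?_)
  have := hsub.length_le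
  omega

private lemma exists_chain_of_dist_le {H : SimpleHypergraph V} {A B : Finset V} {c : ℕ}
    (h : edgeDist H A B ≤ (c : ℕ∞)) :
    ∃ l, IsPIChain H l ∧ l.head? = some A ∧ l.getLast? = some B ∧ l.length ≤ c + 1 := by
  by_contra hc
  push_neg at hc
  have hlow : ((c+1 : ℕ) : ℕ∞) ≤ edgeDist H A B := by
    apply le_sInf
    rintro b ⟨l, ⟨hpi, hh, hla⟩, rfl⟩
    have h1 := hc l hpi hh hla
    have h2 : 0 < l.length := List.length_pos_iff.mpr hpi.1.1.1
    exact Nat.cast_le.mpr (by omega)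
  have := le_trans hlow h
  have := Nat.cast_le.mp this
  omega

private lemma prepend_chain {H : SimpleHypergraph V} {d : ℕ}
    (huni : ∀ e ∈ H.edges, e.card = d)
    {l : List (Finset V)} {E K B : Finset V}
    (hl : IsProperChain H l) (hE : E ∈ H.edges) (hd2 : 2 ≤ d)
    (hh : l.head? = some K) (hla : l.getLast? = some B)
    (hEK : (E ∩ K).card + 1 = d) (hEB : E ∩ B = ∅) (hlen : l.length ≤ d) :
    IsProperChain H (E :: l) ∧ (E :: l).getLast? = some B := by
  obtain ⟨⟨hnil, hnd, hedge, xs, hxnd, hxlen, hxmem⟩, hprop⟩ := hl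
  have hl' : IsProperChain H l := ⟨⟨hnil, hnd, hedge, xs, hxnd, hxlen, hxmem⟩, hprop⟩
  have hlpos : 0 < l.length := List.length_pos_iff.mpr hnil
  have hK0 : l.getD 0 ∅ = K := head_getD hh
  have hBL : l.getD (l.length - 1) ∅ = B := last_getD hla
  have hEcard : E.card = d := huni _ hE
  -- l has length at least 2
  have hlen2 : 2 ≤ l.length := by
    by_contra hc
    have h1 : l.length = 1 := by omega
    have hKB : K = B := by rw [← hK0, ← hBL, h1]
    have h2 : (E ∩ K).card = 0 := by rw [hKB, hEB]; simp
    omega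
  -- E is not an edge of l
  have hEnl : E ∉ l := by
    intro hmem
    obtain ⟨i, hi, hei⟩ := List.mem_iff_getElem.mp hmem
    have hgi : l.getD i ∅ = E := by rw [getD_eq' _ _ hi, hei]
    have hdrop := (chain_drop huni hl' E (l.length - 1 - i) i (by omega)).2
    rw [show i + (l.length - 1 - i) = l.length - 1 by omega, hBL, hgi,
      Finset.inter_self, Finset.inter_comm, hEB] at hdrop
    simp only [Finset.card_empty] at hdrop
    omega
  set b := xs.length with hb
  have hbl : b + 1 = l.length := hxlen
  have hb1 : 1 ≤ b := by omega
  -- last vertex of xs lies in B, hence not in E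
  have hxlast := hxmem (b-1) (by omega)
  set w := xs.get ⟨b-1, by omega⟩ with hw
  have hgb : l.getD (b-1+1) ∅ = B := by
    rw [show b - 1 + 1 = l.length - 1 by omega, hBL]
  rw [hgb] at hxlast
  have hwB : w ∈ B := (Finset.mem_inter.mp hxlast).2
  have hwE : w ∉ E := by
    intro hcon
    have : w ∈ E ∩ B := Finset.mem_inter.mpr ⟨hcon, hwB⟩
    rw [hEB] at this
    simp at this
  -- find a fresh vertex x₀ ∈ E ∩ K avoiding xs
  have hwmem : w ∈ xs.toFinset := List.mem_toFinset.mpr (xs.get_mem _)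
  have hcardxs : xs.toFinset.card = b := List.toFinset_card_of_nodup hxnd
  have hblock : ((E ∩ K) ∩ xs.toFinset).card ≤ b - 1 := by
    have hsub : (E ∩ K) ∩ xs.toFinset ⊆ xs.toFinset.erase w := by
      intro x hx
      rw [Finset.mem_erase]
      obtain ⟨hx1, hx2⟩ := Finset.mem_inter.mp hx
      refine ⟨?_, hx2⟩
      rintro rfl
      exact hwE (Finset.mem_inter.mp hx1).1
    calc ((E ∩ K) ∩ xs.toFinset).card ≤ (xs.toFinset.erase w).card := Finset.card_le_card hsub
      _ = b - 1 := by rw [Finset.card_erase_of_mem hwmem, hcardxs]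
  have hpos : 0 < ((E ∩ K) \ xs.toFinset).card := by
    have h5 := Finset.card_inter_add_card_sdiff (E ∩ K) xs.toFinset
    omega
  obtain ⟨x₀, hx₀⟩ := Finset.card_pos.mp hpos
  have hx₀EK : x₀ ∈ E ∩ K := (Finset.mem_sdiff.mp hx₀).1
  have hx₀xs : x₀ ∉ xs := fun hmm => (Finset.mem_sdiff.mp hx₀).2 (List.mem_toFinset.mpr hmm)
  -- build the chain
  refine ⟨⟨⟨List.cons_ne_nil _ _, List.nodup_cons.mpr ⟨hEnl, hnd⟩, ?_,
      x₀ :: xs, List.nodup_cons.mpr ⟨hx₀xs, hxnd⟩, by simp; omega, ?_⟩, ?_⟩, ?_⟩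
  · intro e he
    rcases List.mem_cons.mp he with h' | h'
    · rw [h']; exact hE
    · exact hedge e h'
  · intro i hi
    cases i with
    | zero =>
      have : (x₀ :: xs).get ⟨0, hi⟩ = x₀ := rfl
      rw [this]
      simp only [List.getD_cons_zero, List.getD_cons_succ]
      rw [hK0]
      exact hx₀EK
    | succ j =>
      have hj : j < xs.length := by simpa using hi
      have : (x₀ :: xs).get ⟨j+1, hi⟩ = xs.get ⟨j, hj⟩ := by simp
      rw [this]
      simp only [List.getD_cons_succ]
      exact hxmem j hj
  · intro i hi
    cases i with
    | zero =>
      simp only [List.getD_cons_zero, List.getD_cons_succ]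
      rw [hK0, huni K (by rw [← hK0]; exact chain_edge_mem ⟨hnil, hnd, hedge, xs, hxnd, hxlen, hxmem⟩ hlpos)]
      exact hEK
    | succ j =>
      simp only [List.getD_cons_succ]
      exact hprop j (by simpa using hi)
  · cases l with
    | nil => exact absurd rfl hnil
    | cons a t => rw [List.getLast?_cons_cons]; exact hla

private lemma no_short {H : SimpleHypergraph V} {d : ℕ}
    (huni : ∀ e ∈ H.edges, e.card = d)
    (hpcd : ∀ A ∈ H.edges, ∀ B ∈ H.edges, (A ∩ B).Nonempty →
      edgeDist H A B = ((d - (A ∩ B).card : ℕ) : ℕ∞))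
    {E G K1 : Finset V} (hE : E ∈ H.edges) (hK1 : K1 ∈ H.edges) (hG : G ∈ H.edges)
    (hd2 : 2 ≤ d)
    (hdistG : ((d:ℕ∞) + 1) ≤ edgeDist H E G) (hEG : E ∩ G = ∅)
    (hEK : (E ∩ K1).card + 1 = d) (hne : (K1 ∩ G).Nonempty) : False := by
  have hc1 : 1 ≤ (K1 ∩ G).card := Finset.card_pos.mpr hne
  have hdist := hpcd K1 hK1 G hG hne
  obtain ⟨lc, hlcpi, hlch, hlcl, hlclen⟩ := exists_chain_of_dist_le (le_of_eq hdist)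
  have hlen : lc.length ≤ d := by omega
  obtain ⟨hchain, hlast⟩ := prepend_chain huni hlcpi.1 hE hd2 hlch hlcl hEK hEG hlen
  have hdle := edgeDist_le hchain rfl hlast
  have hsimp : ((E :: lc).length - 1 : ℕ) = lc.length := by simp
  rw [hsimp] at hdle
  have hfin : ((d+1:ℕ):ℕ∞) ≤ ((lc.length:ℕ):ℕ∞) := by
    rw [Nat.cast_add_one]
    exact le_trans hdistG hdle
  have := Nat.cast_le.mp hfin
  omega

private lemma mem_restrict {H : SimpleHypergraph V} {P : Finset V → Prop} {e : Finset V} :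
    e ∈ (H.restrict P).edges ↔ e ∈ H.edges ∧ P e := by
  simp [SimpleHypergraph.restrict, Finset.mem_filter]

/-- The vertex neighbor set `N(E)` of an edge: union of `F \ E` over edges at distance 1. -/
def nbrSet (H : SimpleHypergraph V) (E : Finset V) : Finset V :=
  (H.edges.filter fun F => edgeDist H E F = 1).sup fun F => F \ E

variable (k : Type*) [Field k]

/-- The squarefree monomial attached to an edge. -/
def edgeMonomial (E : Finset V) : MvPolynomial V k := ∏ x ∈ E, MvPolynomial.X x

/-- The edge ideal of a hypergraph. -/
def edgeIdeal (H : SimpleHypergraph V) : Ideal (MvPolynomial V k) :=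
  Ideal.span ((fun E => edgeMonomial k E) '' ↑H.edges)

/-- The exponent vector of the squarefree monomial attached to an edge. -/
def mexp (E : Finset V) : V →₀ ℕ := ∑ x ∈ E, Finsupp.single x 1

/-- The minimal monomials (w.r.t. divisibility) among a finite set of monomials;
these are the minimal generators of the monomial ideal they generate. -/
def minMon (A : Finset (V →₀ ℕ)) : Finset (V →₀ ℕ) :=
  A.filter fun m => ∀ m' ∈ A, m' ≤ m → m' = m

/-- Minimal generators of `J ∩ K`, where `J`, `K` are the monomial ideals with
(minimal) monomial generators `A`, `B`: minimal elements among the pairwise lcm's. -/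
def interMin (A B : Finset (V →₀ ℕ)) : Finset (V →₀ ℕ) :=
  minMon ((A ×ˢ B).image fun p => p.1 ⊔ p.2)

/-- Eliahou–Kervaire splitting: the monomial ideal generated by `A ∪ B` is split as
the sum of the ideals generated by `A` and by `B`. -/
def IsSplitting (A B : Finset (V →₀ ℕ)) : Prop :=
  A.Nonempty ∧ B.Nonempty ∧ Disjoint A B ∧
  (∀ m ∈ A ∪ B, ∀ m' ∈ A ∪ B, m' ≤ m → m' = m) ∧
  ∃ φ ψ : (V →₀ ℕ) → (V →₀ ℕ),
    (∀ w ∈ interMin A B, φ w ∈ A ∧ ψ w ∈ B ∧ w = φ w ⊔ ψ w) ∧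
    ∀ S ⊆ interMin A B, S.Nonempty → S.sup φ < S.sup id ∧ S.sup ψ < S.sup id

/-- A splitting edge of a hypergraph: `I(H) = (x^E) + I(H \ E)` is a splitting. -/
def IsSplittingEdge (H : SimpleHypergraph V) (E : Finset V) : Prop :=
  E ∈ H.edges ∧ IsSplitting {mexp E} ((H.edges.erase E).image mexp)

variable [LinearOrder V]

/-- Total degree of a monomial. -/
def mdeg (m : V →₀ ℕ) : ℕ := m.sum fun _ e => e

/-- Basis of the degree-`j` part of the `i`-th term of the Taylor complex of the monomial
ideal generated by `G`: `i`-element subsets of `G` whose lcm has degree `j`. -/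
def TaylorIndex (G : Finset (V →₀ ℕ)) (i j : ℕ) : Finset (Finset (V →₀ ℕ)) :=
  G.powerset.filter fun S => S.card = i ∧ mdeg (S.sup id) = j

/-- Matrix of the Taylor-complex differential `T_{i+1} → T_i` reduced mod the maximal
ideal, in homological degree-`j` graded part. -/
def taylorMatrix (G : Finset (V →₀ ℕ)) (i j : ℕ) :
    Matrix (TaylorIndex G i j) (TaylorIndex G (i+1) j) k :=
  fun S' S =>
    if (S' : Finset (V →₀ ℕ)) ⊆ (S : Finset (V →₀ ℕ)) ∧
        (S' : Finset (V →₀ ℕ)).sup id = (S : Finset (V →₀ ℕ)).sup id then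
      ∑ m ∈ (S : Finset (V →₀ ℕ)) \ (S' : Finset (V →₀ ℕ)),
        (-1 : k) ^ ((S' : Finset (V →₀ ℕ)).filter fun a => toLex a < toLex m).card
    else 0

/-- The Taylor-complex differential reduced mod the maximal ideal. -/
def taylorBoundary (G : Finset (V →₀ ℕ)) (i j : ℕ) :
    ((TaylorIndex G (i+1) j) → k) →ₗ[k] ((TaylorIndex G i j) → k) :=
  Matrix.mulVecLin (taylorMatrix k G i j)

/-- The graded Betti number `β_{i,j}` of the monomial ideal generated by `G`, computed as
the dimension of the degree-`j` part of the `i`-th homology of the Taylor complex tensored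
with the residue field. -/
def monomialBetti (G : Finset (V →₀ ℕ)) (i j : ℕ) : ℕ :=
  Module.finrank k (LinearMap.ker (taylorBoundary k G i j)) -
  Module.finrank k (LinearMap.range (taylorBoundary k G (i+1) j))

/-- Castelnuovo–Mumford regularity of the monomial ideal generated by `G`. -/
def monReg (G : Finset (V →₀ ℕ)) : ℕ :=
  sSup {r | ∃ i j, monomialBetti k G i j ≠ 0 ∧ r + i = j}

/-- Projective dimension of the monomial ideal generated by `G`. -/
def monPdim (G : Finset (V →₀ ℕ)) : ℕ :=
  sSup {i | ∃ j, monomialBetti k G i j ≠ 0}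

/-- Graded Betti numbers of the edge ideal of a hypergraph. -/
def edgeBetti (H : SimpleHypergraph V) (i j : ℕ) : ℕ :=
  monomialBetti k (H.edges.image mexp) i j

/-- Regularity of the edge ideal of a hypergraph. -/
def edgeReg (H : SimpleHypergraph V) : ℕ :=
  monReg k (H.edges.image mexp)

set_option linter.unusedSectionVars false

theorem restrict_uniformPC {V : Type*} [DecidableEq V]
    (H : SimpleHypergraph V) (d : ℕ) (hpc : UniformPC H d)
    (E : Finset V) (hE : E ∈ H.edges) :
    UniformPC (H.restrict fun F => ((d : ℕ∞) + 1) ≤ edgeDist H E F) d := by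
  classical
  obtain ⟨huni, hpcd⟩ := hpc
  have hd2 : 2 ≤ d := by
    have := H.card_ge E hE
    rw [huni E hE] at this
    exact this
  -- disjointness from far edges
  have hdisj : ∀ G ∈ H.edges, ((d:ℕ∞) + 1) ≤ edgeDist H E G → E ∩ G = ∅ := by
    intro G hG h
    by_contra hne
    have hne' : (E ∩ G).Nonempty := Finset.nonempty_iff_ne_empty.mpr hne
    have hc1 : 1 ≤ (E ∩ G).card := Finset.card_pos.mpr hne'
    rw [hpcd E hE G hG hne'] at h
    rw [show ((d:ℕ∞) + 1) = ((d+1:ℕ):ℕ∞) by rw [Nat.cast_add_one]] at h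
    have := Nat.cast_le.mp h
    omega
  constructor
  · intro e he
    exact huni e (mem_restrict.mp he).1
  · intro E' hE' F' hF' hne
    obtain ⟨hE'H, hE'far⟩ := mem_restrict.mp hE'
    obtain ⟨hF'H, hF'far⟩ := mem_restrict.mp hF'
    set t := (E' ∩ F').card with ht
    have ht1 : 1 ≤ t := Finset.card_pos.mpr hne
    have hE'c : E'.card = d := huni _ hE'H
    have hF'c : F'.card = d := huni _ hF'H
    have htd : t ≤ d := by
      rw [← hE'c]
      exact Finset.card_le_card (Finset.inter_subset_left)
    have hEE' : E ∩ E' = ∅ := hdisj E' hE'H hE'far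
    have hEF' : E ∩ F' = ∅ := hdisj F' hF'H hF'far
    have hdist : edgeDist H E' F' = ((d - t : ℕ) : ℕ∞) := hpcd E' hE'H F' hF'H hne
    obtain ⟨l, hlpi, hlh, hll, hllen⟩ := exists_chain_of_dist_le (le_of_eq hdist)
    have hl0 : l.getD 0 ∅ = E' := head_getD hlh
    have hlL : l.getD (l.length - 1) ∅ = F' := last_getD hll
    have hlpos : 0 < l.length := List.length_pos_iff.mpr hlpi.1.1.1
    -- each edge of the chain is contained in E' ∪ F'
    have hsubEF : ∀ i, i < l.length → l.getD i ∅ ⊆ E' ∪ F' := by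
      intro i hi
      have hemem := chain_edge_mem hlpi.1.1 hi
      have hecard : (l.getD i ∅).card = d := huni _ hemem
      have h1 := (chain_drop huni hlpi.1 E' i 0 (by omega)).2
      rw [Nat.zero_add, hl0, Finset.inter_self, hE'c] at h1
      have h2 := (chain_drop huni hlpi.1 F' (l.length - 1 - i) i (by omega)).1
      rw [show i + (l.length - 1 - i) = l.length - 1 by omega, hlL,
        Finset.inter_self, hF'c] at h2
      have hu := Finset.card_union_add_card_inter (l.getD i ∅ ∩ E') (l.getD i ∅ ∩ F')
      rw [← Finset.inter_union_distrib_left] at hu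
      have hii : (l.getD i ∅ ∩ E') ∩ (l.getD i ∅ ∩ F') ⊆ E' ∩ F' := by
        intro x hx
        simp only [Finset.mem_inter] at *
        exact ⟨hx.1.2, hx.2.2⟩
      have hiic : ((l.getD i ∅ ∩ E') ∩ (l.getD i ∅ ∩ F')).card ≤ t :=
        Finset.card_le_card hii
      have hcu : (l.getD i ∅).card ≤ (l.getD i ∅ ∩ (E' ∪ F')).card := by omega
      have heq := Finset.eq_of_subset_of_card_le Finset.inter_subset_left hcu
      exact Finset.inter_eq_left.mp heq
    -- every edge of the chain is in the restricted hypergraph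
    have hmem' : ∀ e ∈ l, e ∈ (H.restrict fun F => ((d : ℕ∞) + 1) ≤ edgeDist H E F).edges := by
      intro e he
      obtain ⟨i, hi, hei⟩ := List.mem_iff_getElem.mp he
      have hgi : l.getD i ∅ = e := by rw [getD_eq' _ _ hi, hei]
      have hemem : e ∈ H.edges := hlpi.1.1.2.2.1 e he
      have hecard : e.card = d := huni _ hemem
      have hesub : e ⊆ E' ∪ F' := by rw [← hgi]; exact hsubEF i hi
      refine mem_restrict.mpr ⟨hemem, ?_⟩
      by_contra hcon
      have hle : edgeDist H E e ≤ (d : ℕ∞) := Order.le_of_lt_add_one (not_le.mp hcon)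
      obtain ⟨K, hKpi, hKh, hKl, hKlen⟩ := exists_chain_of_dist_le hle
      have hK0 : K.getD 0 ∅ = E := head_getD hKh
      have hKL : K.getD (K.length - 1) ∅ = e := last_getD hKl
      have hKpos : 0 < K.length := List.length_pos_iff.mpr hKpi.1.1.1
      -- E is disjoint from e
      have hEe : E ∩ e = ∅ := by
        rw [Finset.eq_empty_iff_forall_notMem]
        intro x hx
        obtain ⟨hxE, hxe⟩ := Finset.mem_inter.mp hx
        rcases Finset.mem_union.mp (hesub hxe) with h' | h'
        · rw [Finset.eq_empty_iff_forall_notMem] at hEE'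
          exact hEE' x (Finset.mem_inter.mpr ⟨hxE, h'⟩)
        · rw [Finset.eq_empty_iff_forall_notMem] at hEF'
          exact hEF' x (Finset.mem_inter.mpr ⟨hxE, h'⟩)
      rcases Nat.lt_or_ge K.length 2 with hK1 | hK2
      · -- K = [E], so E = e, contradicting disjointness
        have hlen1 : K.length = 1 := by omega
        have : E = e := by rw [← hK0, ← hKL, hlen1]
        rw [this, Finset.inter_self] at hEe
        rw [hEe] at hecard
        simp at hecard
        omega
      · -- K has a second edge K1
        have h1lt : 1 < K.length := hK2
        have hK1mem := chain_edge_mem hKpi.1.1 h1lt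
        have hKprop := hKpi.1.2 0 (by omega)
        rw [hK0] at hKprop
        rw [huni _ hK1mem] at hKprop
        -- drop lemma : K1 meets e
        have hdp := (chain_drop huni hKpi.1 e (K.length - 2) 1 (by omega)).1
        rw [show 1 + (K.length - 2) = K.length - 1 by omega, hKL,
          Finset.inter_self, hecard] at hdp
        have hwpos : 0 < (K.getD 1 ∅ ∩ e).card := by omega
        obtain ⟨w, hwmem⟩ := Finset.card_pos.mp hwpos
        obtain ⟨hwK1, hwe⟩ := Finset.mem_inter.mp hwmem
        rcases Finset.mem_union.mp (hesub hwe) with h' | h'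
        · exact no_short huni hpcd hE hK1mem hE'H hd2 hE'far hEE' hKprop
            ⟨w, Finset.mem_inter.mpr ⟨hwK1, h'⟩⟩
        · exact no_short huni hpcd hE hK1mem hF'H hd2 hF'far hEF' hKprop
            ⟨w, Finset.mem_inter.mpr ⟨hwK1, h'⟩⟩
    -- the chain is a PI chain of the restricted hypergraph
    have hpirestrict : IsPIChain (H.restrict fun F => ((d : ℕ∞) + 1) ≤ edgeDist H E F) l := by
      obtain ⟨⟨⟨hnil, hnd, hedge, xs, hx1, hx2, hx3⟩, hprop⟩, hirr⟩ := hlpi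
      refine ⟨⟨⟨hnil, hnd, hmem', xs, hx1, hx2, hx3⟩, hprop⟩, ?_⟩
      intro l' hs hne' hh' hla' hpc'
      exact hirr l' hs hne' hh' hla' ⟨⟨hpc'.1.1, hpc'.1.2.1,
        fun e he => (mem_restrict.mp (hpc'.1.2.2.1 e he)).1, hpc'.1.2.2.2⟩, hpc'.2⟩
    have hup : edgeDist (H.restrict fun F => ((d : ℕ∞) + 1) ≤ edgeDist H E F) E' F'
        ≤ ((d - t : ℕ) : ℕ∞) := by
      have hmemS : ((l.length - 1 : ℕ) : ℕ∞) ∈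
          ((fun l : List (Finset V) => ((l.length - 1 : ℕ) : ℕ∞)) ''
          {l | IsPIChain (H.restrict fun F => ((d : ℕ∞) + 1) ≤ edgeDist H E F) l ∧
            l.head? = some E' ∧ l.getLast? = some F'}) :=
        ⟨l, ⟨hpirestrict, hlh, hll⟩, rfl⟩
      exact le_trans (sInf_le hmemS) (Nat.cast_le.mpr (by omega))
    have hlow : ((d - t : ℕ) : ℕ∞) ≤
        edgeDist (H.restrict fun F => ((d : ℕ∞) + 1) ≤ edgeDist H E F) E' F' := by
      apply le_sInf
      rintro b ⟨l'', ⟨hpi'', hh'', hla''⟩, rfl⟩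
      have hproper : IsProperChain H l'' :=
        ⟨⟨hpi''.1.1.1, hpi''.1.1.2.1,
          fun e he => (mem_restrict.mp (hpi''.1.1.2.2.1 e he)).1, hpi''.1.1.2.2.2⟩,
          hpi''.1.2⟩
      have hpos'' : 0 < l''.length := List.length_pos_iff.mpr hproper.1.1
      have h0 : l''.getD 0 ∅ = E' := head_getD hh''
      have hL : l''.getD (l''.length - 1) ∅ = F' := last_getD hla''
      have hdrop := (chain_drop huni hproper F' (l''.length - 1) 0 (by omega)).1
      rw [Nat.zero_add, hL, Finset.inter_self, hF'c, h0, ← ht] at hdrop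
      exact Nat.cast_le.mpr (by omega)
    exact le_antisymm hup hlow

end
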